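/- arXiv:1907.09247 — 4 statements merged into one kernel-verified Lean document; each statement's English description precedes it below -/
import Mathlib

section
/- Persistence: for any belief view W and any epistemic formula φ, if W is an epistemic model of {φ} (written W ⊨ φ) then W^t ⊨ φ. -/
namespace Epist

attribute [local instance] Classical.propDecidable

/-- Epistemic formulas over a set (type) of atoms `α`. -/
inductive EForm (α : Type) : Type where
  | bot : EForm α
  | atom : α → EForm α
  | and : EForm α → EForm α → EForm α
  | or : EForm α → EForm α → EForm α
  | imp : EForm α → EForm α → EForm α
  | K : EForm α → EForm α

variable {α : Type}

/-- ¬φ abbreviates φ → ⊥. -/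
def EForm.neg (φ : EForm α) : EForm α := .imp φ .bot

/-- ⊤ abbreviates ¬⊥. -/
def EForm.top : EForm α := EForm.neg .bot

/-- Atoms occurring in a formula. -/
def EForm.atoms : EForm α → Set α
  | .bot => ∅
  | .atom a => {a}
  | .and φ ψ => φ.atoms ∪ ψ.atoms
  | .or φ ψ => φ.atoms ∪ ψ.atoms
  | .imp φ ψ => φ.atoms ∪ ψ.atoms
  | .K φ => φ.atoms

/-- A belief view: a set of HT-interpretations ⟨H,T⟩ (as pairs of sets of atoms). -/
abbrev BView (α : Type) := Set (Set α × Set α)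

/-- W^t : the total belief view {⟨T,T⟩ : ⟨H,T⟩ ∈ W}. -/
def tview (W : BView α) : BView α := (fun i => (i.2, i.2)) '' W

/-- Wellformedness of a belief view: nonempty and H ⊆ T for all members. -/
def isBView (W : BView α) : Prop := W.Nonempty ∧ ∀ i ∈ W, i.1 ⊆ i.2

/-- A belief view is total when all its HT-interpretations are total. -/
def totalView (W : BView α) : Prop := ∀ i ∈ W, i.1 = i.2

/-- Satisfaction of an epistemic formula by a belief interpretation ⟨W,H,T⟩. -/
def sat : EForm α → BView α → Set α → Set α → Prop
  | .bot, _, _, _ => False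
  | .atom a, _, H, _ => a ∈ H
  | .and φ ψ, W, H, T => sat φ W H T ∧ sat ψ W H T
  | .or φ ψ, W, H, T => sat φ W H T ∨ sat ψ W H T
  | .imp φ ψ, W, H, T =>
      (sat φ W H T → sat ψ W H T) ∧ (sat φ (tview W) T T → sat ψ (tview W) T T)
  | .K φ, W, _, _ => ∀ i ∈ W, sat φ W i.1 i.2

/-- ⟨W,H',T'⟩ ⊨ φ for all ⟨H',T'⟩ ∈ W. -/
def epSat (W : BView α) (φ : EForm α) : Prop := ∀ i ∈ W, sat φ W i.1 i.2

/-- W is an epistemic model of the theory Γ. -/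
def epModel (W : BView α) (Γ : Set (EForm α)) : Prop :=
  isBView W ∧ ∀ φ ∈ Γ, epSat W φ

/-- ⟨W,H,T⟩ is a belief model of the theory Γ. -/
def beliefModel (W : BView α) (H T : Set α) (Γ : Set (EForm α)) : Prop :=
  isBView W ∧ H ⊆ T ∧ (∀ φ ∈ Γ, sat φ W H T) ∧ ∀ φ ∈ Γ, epSat W φ

/-- Order ⪯ on belief interpretations: ⟨W',H',T'⟩ ⪯ ⟨W,H,T⟩. -/
def biLE (W' : BView α) (H' T' : Set α) (W : BView α) (H T : Set α) : Prop :=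
  (T' = T ∧ H' ⊆ H) ∧
  (∀ i ∈ W, ∃ H₁, (H₁, i.2) ∈ W' ∧ H₁ ⊆ i.1) ∧
  (∀ i ∈ W', ∃ H₁, (H₁, i.2) ∈ W ∧ i.1 ⊆ H₁)

/-- Strict order ≺ on belief interpretations. -/
def biLT (W' : BView α) (H' T' : Set α) (W : BView α) (H T : Set α) : Prop :=
  biLE W' H' T' W H T ∧ (W', H', T') ≠ (W, H, T)

/-- Order ⪯ on belief views. -/
def viewLE (W₁ W₂ : BView α) : Prop :=
  (∀ i ∈ W₂, ∃ H₁, (H₁, i.2) ∈ W₁ ∧ H₁ ⊆ i.1) ∧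
  (∀ i ∈ W₁, ∃ H₂, (H₂, i.2) ∈ W₂ ∧ i.1 ⊆ H₂)

/-- Strict order ≺ on belief views. -/
def viewLT (W₁ W₂ : BView α) : Prop := viewLE W₁ W₂ ∧ W₁ ≠ W₂

/-- ⟨W,T⟩ is an equilibrium belief model of Γ. -/
def eqBeliefModel (Γ : Set (EForm α)) (W : BView α) (T : Set α) : Prop :=
  totalView W ∧ beliefModel W T T Γ ∧
  ∀ W' H' T', beliefModel W' H' T' Γ → ¬ biLT W' H' T' W T T

/-- ⟨W,T⟩ is a weak equilibrium belief model of Γ: no belief-total (i.e. with total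
view) belief model of Γ is ≺-smaller. -/
def weakEqBeliefModel (Γ : Set (EForm α)) (W : BView α) (T : Set α) : Prop :=
  totalView W ∧ beliefModel W T T Γ ∧
  ∀ W' H' T', totalView W' → beliefModel W' H' T' Γ → ¬ biLT W' H' T' W T T

/-- Identification of a set of propositional interpretations with a total belief view. -/
def ofSets (S : Set (Set α)) : BView α := (fun T => (T, T)) '' S

/-- W is a FAEEL-world view of Γ iff W = { T : ⟨W,T⟩ is an equilibrium belief model }. -/
def FAEEL (Γ : Set (EForm α)) (W : BView α) : Prop :=
  isBView W ∧ totalView W ∧ W = ofSets {T | eqBeliefModel Γ W T}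

/-- W is a weak autoepistemic world view of Γ. -/
def weakAEWorldView (Γ : Set (EForm α)) (W : BView α) : Prop :=
  isBView W ∧ totalView W ∧ W = ofSets {T | weakEqBeliefModel Γ W T}

/-- W is a FEEL-world view of Γ. -/
def FEEL (Γ : Set (EForm α)) (W : BView α) : Prop :=
  totalView W ∧ epModel W Γ ∧ ∀ W', epModel W' Γ → ¬ viewLT W' W

/-- A belief view is simple iff ⟨H,T⟩,⟨H',T⟩ ∈ W imply H = H'. -/
def simpleView (W : BView α) : Prop := ∀ i ∈ W, ∀ j ∈ W, i.2 = j.2 → i.1 = j.1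

/-- W is an EEL-world view of Γ. -/
def EEL (Γ : Set (EForm α)) (W : BView α) : Prop :=
  totalView W ∧ epModel W Γ ∧
  ¬ ∃ W', simpleView W' ∧ epModel W' Γ ∧ tview W' = W ∧ ∃ i ∈ W', i.1 ⊂ i.2

/-- Ordinary here-and-there satisfaction (for objective, i.e. K-free, formulas). -/
def htSat (φ : EForm α) (H T : Set α) : Prop := sat φ (∅ : BView α) H T

/-- T is a stable model of the (objective) theory Δ. -/
def stableModel (Δ : Set (EForm α)) (T : Set α) : Prop :=
  (∀ φ ∈ Δ, htSat φ T T) ∧ ∀ H, H ⊂ T → ¬ ∀ φ ∈ Δ, htSat φ H T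

/-- SM[Δ] : the set of stable models of Δ. -/
def SMset (Δ : Set (EForm α)) : Set (Set α) := {T | stableModel Δ T}

/-- Subjective reduct of a formula w.r.t. a belief view W and a signature U:
each maximal subformula Kφ with Atoms(φ) ⊆ U is replaced by ⊤ if W ⊨ Kφ
and by ⊥ otherwise. -/
noncomputable def reduct (W : BView α) (U : Set α) : EForm α → EForm α
  | .bot => .bot
  | .atom a => .atom a
  | .and φ ψ => .and (reduct W U φ) (reduct W U ψ)
  | .or φ ψ => .or (reduct W U φ) (reduct W U ψ)
  | .imp φ ψ => .imp (reduct W U φ) (reduct W U ψ)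
  | .K φ =>
      if φ.atoms ⊆ U then (if epSat W (.K φ) then EForm.top else .bot)
      else .K (reduct W U φ)

/-- W is a G91-world view of Γ iff W = SM[Γ^W]. -/
def G91 (Γ : Set (EForm α)) (W : BView α) : Prop :=
  isBView W ∧ totalView W ∧ W = ofSets (SMset (reduct W Set.univ '' Γ))

/-- Negatively subjective reduct: each maximal subformula ¬Kφ is replaced
by ⊤ if W ⊭ Kφ and by ⊥ otherwise. -/
noncomputable def negReduct (W : BView α) : EForm α → EForm α
  | .bot => .bot
  | .atom a => .atom a
  | .and φ ψ => .and (negReduct W φ) (negReduct W ψ)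
  | .or φ ψ => .or (negReduct W φ) (negReduct W ψ)
  | .imp (.K φ) .bot => if epSat W (.K φ) then .bot else EForm.top
  | .imp φ ψ => .imp (negReduct W φ) (negReduct W ψ)
  | .K φ => .K (negReduct W φ)

/-- Atom, ⊤ or ⊥. -/
def isAtomBase (φ : EForm α) : Prop := (∃ a, φ = .atom a) ∨ φ = EForm.top ∨ φ = .bot

/-- Objective literals: l, ¬l or ¬¬l for l an atom, ⊤ or ⊥. -/
def isObjLit (φ : EForm α) : Prop :=
  isAtomBase φ ∨ (∃ ψ, isAtomBase ψ ∧ φ = EForm.neg ψ) ∨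
    (∃ ψ, isAtomBase ψ ∧ φ = EForm.neg (EForm.neg ψ))

/-- Subjective literals: Kl, ¬Kl or ¬¬Kl for l an objective literal. -/
def isSubjLit (φ : EForm α) : Prop :=
  (∃ l, isObjLit l ∧ φ = .K l) ∨ (∃ l, isObjLit l ∧ φ = EForm.neg (.K l)) ∨
    (∃ l, isObjLit l ∧ φ = EForm.neg (EForm.neg (.K l)))

/-- Positive subjective literals: Kl. -/
def isPosSubjLit (φ : EForm α) : Prop := ∃ l, isObjLit l ∧ φ = .K l

/-- A rule: a head disjunction of atoms and a body list of literals. -/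
structure ERule (α : Type) where
  head : List α
  body : List (EForm α)

/-- Wellformedness of a rule: every body member is an (objective or subjective) literal. -/
def ERule.wf (r : ERule α) : Prop := ∀ φ ∈ r.body, isObjLit φ ∨ isSubjLit φ

/-- Disjunction of atoms (⊥ when empty). -/
def disjForm : List α → EForm α
  | [] => .bot
  | a :: l => .or (.atom a) (disjForm l)

/-- Conjunction of formulas (⊤ when empty). -/
def conjForm : List (EForm α) → EForm α
  | [] => EForm.top
  | φ :: l => .and φ (conjForm l)

/-- The formula Head(r) ← Body(r) corresponding to a rule. -/
def ERule.form (r : ERule α) : EForm α := .imp (conjForm r.body) (disjForm r.head)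

/-- Atoms of Head(r). -/
def ERule.headAtoms (r : ERule α) : Set α := {a | a ∈ r.head}

/-- Atoms of Body_obj(r). -/
def ERule.objBodyAtoms (r : ERule α) : Set α := {a | ∃ φ ∈ r.body, isObjLit φ ∧ a ∈ φ.atoms}

/-- Atoms of Body_sub(r). -/
def ERule.subjBodyAtoms (r : ERule α) : Set α := {a | ∃ φ ∈ r.body, isSubjLit φ ∧ a ∈ φ.atoms}

/-- Atoms of Body⁺_sub(r). -/
def ERule.posSubjBodyAtoms (r : ERule α) : Set α :=
  {a | ∃ φ ∈ r.body, isPosSubjLit φ ∧ a ∈ φ.atoms}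

/-- Atoms(r). -/
def ERule.atoms (r : ERule α) : Set α := r.headAtoms ∪ {a | ∃ φ ∈ r.body, a ∈ φ.atoms}

/-- A rule is objective if all its body literals are objective. -/
def ERule.objective (r : ERule α) : Prop := ∀ φ ∈ r.body, isObjLit φ

/-- A program is a set of rules. -/
abbrev EProgram (α : Type) := Set (ERule α)

def progWF (P : EProgram α) : Prop := ∀ r ∈ P, r.wf

/-- The theory consisting of the formulas of the rules of a program. -/
def progTheory (P : EProgram α) : Set (EForm α) := ERule.form '' P

def progAtoms (P : EProgram α) : Set α := {a | ∃ r ∈ P, a ∈ r.atoms}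

def progObjective (P : EProgram α) : Prop := ∀ r ∈ P, r.objective

/-- U is an epistemic splitting set of P. -/
def splittingSet (P : EProgram α) (U : Set α) : Prop :=
  ∀ r ∈ P, r.atoms ⊆ U ∨ (r.objBodyAtoms ∪ r.headAtoms) ∩ U = ∅

/-- ⟨B,Tp⟩ is a splitting of P w.r.t. U. -/
def isSplitting (P : EProgram α) (U : Set α) (B Tp : EProgram α) : Prop :=
  B ∩ Tp = ∅ ∧ B ∪ Tp = P ∧ (∀ r ∈ B, r.atoms ⊆ U) ∧
    ∀ r ∈ Tp, (r.objBodyAtoms ∪ r.headAtoms) ∩ U = ∅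

/-- Subjective reduct of a rule. -/
noncomputable def ruleReduct (W : BView α) (U : Set α) (r : ERule α) : ERule α :=
  ⟨r.head, r.body.map (reduct W U)⟩

/-- E_U(Π,W) := (T_U(Π))^W_U, here taking the top part Tp as argument. -/
noncomputable def EU (Tp : EProgram α) (W : BView α) (U : Set α) : EProgram α :=
  ruleReduct W U '' Tp

/-- W_b ⊔ W_t (for total belief views: pointwise unions). -/
def vjoin (W₁ W₂ : BView α) : BView α :=
  {i | ∃ j ∈ W₁, ∃ k ∈ W₂, i = (j.1 ∪ k.1, j.2 ∪ k.2)}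

/-- W|_U (for total belief views: pointwise intersection with U). -/
def vrestrict (W : BView α) (U : Set α) : BView α :=
  {i | ∃ j ∈ W, i = (j.1 ∩ U, j.2 ∩ U)}

/-- Epistemic dependence dep(a,b). -/
def dep (P : EProgram α) (a b : α) : Prop :=
  ∃ r ∈ P, a ∈ r.headAtoms ∪ r.objBodyAtoms ∧ b ∈ r.subjBodyAtoms

/-- Positive epistemic dependence dep⁺(a,b). -/
def depPos (P : EProgram α) (a b : α) : Prop :=
  ∃ r ∈ P, a ∈ r.headAtoms ∪ r.objBodyAtoms ∧ b ∈ r.posSubjBodyAtoms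

/-- P is epistemically stratified. -/
def stratified (P : EProgram α) : Prop :=
  ∃ lam : α → ℕ,
    (∀ r ∈ P, ∀ a ∈ r.atoms \ r.subjBodyAtoms, ∀ b ∈ r.atoms \ r.subjBodyAtoms,
      lam a = lam b) ∧
    ∀ a b, dep P a b → lam a > lam b

/-- P is epistemically tight. -/
def tight (P : EProgram α) : Prop :=
  ∃ lam : α → ℕ,
    (∀ r ∈ P, ∀ a ∈ r.atoms \ r.subjBodyAtoms, ∀ b ∈ r.atoms \ r.subjBodyAtoms,
      lam a = lam b) ∧
    ∀ a b, depPos P a b → lam a > lam b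

/-- A semantics S satisfies the epistemic splitting property. -/
def satisfiesSplitting (S : EProgram α → BView α → Prop) : Prop :=
  ∀ P : EProgram α, progWF P → ∀ U : Set α, splittingSet P U →
    ∀ B Tp : EProgram α, isSplitting P U B Tp →
      ∀ W : BView α,
        S P W ↔ ∃ Wb Wt, S B Wb ∧ S (EU Tp Wb U) Wt ∧ W = vjoin Wb Wt

/-- A semantics S satisfies supra-ASP. -/
def supraASP (S : EProgram α → BView α → Prop) : Prop :=
  ∀ P : EProgram α, progWF P → progObjective P →
    (SMset (progTheory P) ≠ ∅ ∧ ∀ W, (S P W ↔ W = ofSets (SMset (progTheory P)))) ∨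
    (SMset (progTheory P) = ∅ ∧ ∀ W, ¬ S P W)

end Epist
section
namespace Epist

lemma tview_idem {α : Type} (W : BView α) : tview (tview W) = tview W := by
  simp [tview, Set.image_image]

lemma persist {α : Type} (φ : EForm α) :
    ∀ (W : BView α) (H T : Set α), (∀ i ∈ W, i.1 ⊆ i.2) → H ⊆ T →
      sat φ W H T → sat φ (tview W) T T := by
  induction φ with
  | bot => intro W H T _ _ h; exact h
  | atom a => intro W H T _ hHT h; exact hHT h
  | and φ ψ ihφ ihψ =>
      intro W H T hW hHT h
      exact ⟨ihφ W H T hW hHT h.1, ihψ W H T hW hHT h.2⟩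
  | or φ ψ ihφ ihψ =>
      intro W H T hW hHT h
      cases h with
      | inl h => exact Or.inl (ihφ W H T hW hHT h)
      | inr h => exact Or.inr (ihψ W H T hW hHT h)
  | imp φ ψ ihφ ihψ =>
      intro W H T hW hHT h
      refine ⟨h.2, ?_⟩
      rw [tview_idem]
      exact h.2
  | K φ ih =>
      intro W H T hW hHT h
      rintro j hj
      rcases hj with ⟨i, hi, rfl⟩
      exact ih W i.1 i.2 hW (hW i hi) (h i hi)

end Epist
end

namespace Epist
/-- Persistence: if W ⊨ φ then W^t ⊨ φ. -/
theorem stmt1 {α : Type} (W : BView α) (φ : EForm α) (h : epModel W {φ}) :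
    epModel (tview W) {φ} := by
  obtain ⟨⟨hne, hsub⟩, hsat⟩ := h
  refine ⟨⟨hne.image _, ?_⟩, ?_⟩
  · rintro j ⟨i, hi, rfl⟩; exact le_refl _
  · rintro ψ hψ j ⟨i, hi, rfl⟩
    rw [Set.mem_singleton_iff] at hψ; subst hψ
    exact persist ψ W i.1 i.2 hsub (hsub i hi) (hsat ψ rfl i hi)
end Epist
end

section
/- Every FAEEL-world view of any theory Γ is also a FEEL-world view of Γ. -/
namespace Epist

attribute [local instance] Classical.propDecidable

variable {α : Type}

end Epist
namespace Epist
/-- every FAEEL-world view of Γ is also a FEEL-world view of Γ. -/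
theorem stmt3 {α : Type} (Γ : Set (EForm α)) (W : BView α) (h : FAEEL Γ W) :
    FEEL Γ W := by
  obtain ⟨hBV, hTot, hEq⟩ := h
  have hEp : ∀ φ ∈ Γ, epSat W φ := by
    obtain ⟨i, hi⟩ := hBV.1
    have hi' : i ∈ ofSets {T | eqBeliefModel Γ W T} := hEq ▸ hi
    obtain ⟨T, hT, rfl⟩ := hi'
    exact hT.2.1.2.2.2
  refine ⟨hTot, ⟨hBV, hEp⟩, ?_⟩
  rintro W' ⟨hBV', hEp'⟩ ⟨⟨hle1, hle2⟩, hne⟩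
  by_cases hall : ∀ i ∈ W', i.1 = i.2
  · apply hne
    ext i
    constructor
    · intro hi
      obtain ⟨H₂, hH₂, _⟩ := hle2 i hi
      have h1 : H₂ = i.2 := hTot _ hH₂
      have h2 : i.1 = i.2 := hall i hi
      have : i = (H₂, i.2) := by
        rw [h1]; exact Prod.ext h2 rfl
      rw [this]; exact hH₂
    · intro hi
      obtain ⟨H₁, hH₁, _⟩ := hle1 i hi
      have h1 : H₁ = i.2 := hall _ hH₁
      have h2 : i.1 = i.2 := hTot i hi
      have : i = (H₁, i.2) := by
        rw [h1]; exact Prod.ext h2 rfl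
      rw [this]; exact hH₁
  · push_neg at hall
    obtain ⟨⟨H, T⟩, hiW', hne2⟩ := hall
    obtain ⟨H₂, hH₂, _⟩ := hle2 (H, T) hiW'
    have hH₂T : H₂ = T := hTot _ hH₂
    have hTTW : ((T : Set α), T) ∈ W := hH₂T ▸ hH₂
    have hmem : ((T : Set α), T) ∈ ofSets {T | eqBeliefModel Γ W T} := hEq ▸ hTTW
    obtain ⟨T', hT', heq⟩ := hmem
    have hT'T : T' = T := (Prod.mk.injEq T' T' T T ▸ heq).1
    rw [hT'T] at hT'
    refine hT'.2.2 W' H T ?_ ?_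
    · exact ⟨hBV', hBV'.2 _ hiW', fun φ hφ => hEp' φ hφ _ hiW', hEp'⟩
    · refine ⟨⟨⟨rfl, hBV'.2 _ hiW'⟩, hle1, hle2⟩, ?_⟩
      intro hcon
      have : H = T := (Prod.mk.injEq _ _ _ _ ▸ (Prod.mk.injEq _ _ _ _ ▸ hcon).2).1
      exact hne2 this
end Epist
end

section
/- For any theory Γ, a total belief view W is a FAEEL-world view of Γ if and only if W is both a FEEL-world view of Γ and a G91-world view of Γ. -/
namespace Epist

attribute [local instance] Classical.propDecidable

variable {α : Type}

end Epist
namespace Epist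
lemma sat_top {α : Type} (V : BView α) (H T : Set α) : sat EForm.top V H T := by
  simp [EForm.top, EForm.neg, sat]

lemma tview_total {α : Type} {W : BView α} (h : totalView W) : tview W = W := by
  ext i
  constructor
  · rintro ⟨⟨Hj, Tj⟩, hj, rfl⟩
    have e : Hj = Tj := h _ hj
    subst e
    exact hj
  · intro hi
    refine ⟨i, hi, ?_⟩
    obtain ⟨Hi, Ti⟩ := i
    have e : Hi = Ti := h _ hi
    subst e
    rfl

lemma sat_reduct_indep {α : Type} (W : BView α) (φ : EForm α) :
    ∀ V V' H T, sat (reduct W Set.univ φ) V H T ↔ sat (reduct W Set.univ φ) V' H T := by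
  induction φ with
  | bot => intro V V' H T; simp [reduct, sat]
  | atom a => intro V V' H T; simp [reduct, sat]
  | and φ ψ ih1 ih2 =>
      intro V V' H T; simp only [reduct, sat]
      rw [ih1 V V' H T, ih2 V V' H T]
  | or φ ψ ih1 ih2 =>
      intro V V' H T; simp only [reduct, sat]
      rw [ih1 V V' H T, ih2 V V' H T]
  | imp φ ψ ih1 ih2 =>
      intro V V' H T; simp only [reduct, sat]
      rw [ih1 V V' H T, ih2 V V' H T, ih1 (tview V) (tview V') T T,
        ih2 (tview V) (tview V') T T]
  | K φ ih =>
      intro V V' H T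
      simp only [reduct]
      rw [if_pos (Set.subset_univ _)]
      split_ifs with h
      · simp [EForm.top, EForm.neg, sat]
      · simp [sat]

lemma sat_reduct {α : Type} {W : BView α} (ht : totalView W) (hne : W.Nonempty)
    (φ : EForm α) : ∀ H T, sat φ W H T ↔ sat (reduct W Set.univ φ) W H T := by
  induction φ with
  | bot => intro H T; simp [reduct]
  | atom a => intro H T; simp [reduct]
  | and φ ψ ih1 ih2 =>
      intro H T; simp only [reduct, sat]
      rw [ih1 H T, ih2 H T]
  | or φ ψ ih1 ih2 =>
      intro H T; simp only [reduct, sat]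
      rw [ih1 H T, ih2 H T]
  | imp φ ψ ih1 ih2 =>
      intro H T; simp only [reduct, sat, tview_total ht]
      rw [ih1 H T, ih2 H T, ih1 T T, ih2 T T]
  | K φ ih =>
      intro H T
      simp only [reduct]
      rw [if_pos (Set.subset_univ _)]
      by_cases h : epSat W (.K φ)
      · rw [if_pos h]
        constructor
        · intro _; exact sat_top ..
        · intro _
          obtain ⟨i, hi⟩ := hne
          exact h i hi
      · rw [if_neg h]
        constructor
        · intro hK
          exact absurd (fun i _ => hK) h
        · intro hF
          exact absurd hF (by simp [sat])

lemma htSat_reduct {α : Type} {W : BView α} (ht : totalView W) (hne : W.Nonempty)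
    (φ : EForm α) (H T : Set α) : htSat (reduct W Set.univ φ) H T ↔ sat φ W H T := by
  rw [htSat, sat_reduct_indep W φ ∅ W H T, ← sat_reduct ht hne φ H T]

lemma stable_iff {α : Type} {W : BView α} (ht : totalView W) (hne : W.Nonempty)
    (Γ : Set (EForm α)) (T : Set α) :
    stableModel (reduct W Set.univ '' Γ) T ↔
      (∀ φ ∈ Γ, sat φ W T T) ∧ ∀ H, H ⊂ T → ¬ ∀ φ ∈ Γ, sat φ W H T := by
  unfold stableModel
  constructor
  · rintro ⟨h1, h2⟩
    refine ⟨fun φ hφ => (htSat_reduct ht hne φ T T).1 (h1 _ ⟨φ, hφ, rfl⟩),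
      fun H hH hall => h2 H hH ?_⟩
    rintro _ ⟨φ, hφ, rfl⟩
    exact (htSat_reduct ht hne φ H T).2 (hall φ hφ)
  · rintro ⟨h1, h2⟩
    refine ⟨?_, fun H hH hall => h2 H hH
      fun φ hφ => (htSat_reduct ht hne φ H T).1 (hall _ ⟨φ, hφ, rfl⟩)⟩
    rintro _ ⟨φ, hφ, rfl⟩
    exact (htSat_reduct ht hne φ T T).2 (h1 φ hφ)

lemma mem_ofSets {α : Type} {S : Set (Set α)} {T : Set α} : (T, T) ∈ ofSets S ↔ T ∈ S := by
  constructor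
  · rintro ⟨T', hT', h⟩
    rw [Prod.mk.injEq] at h
    rwa [← h.1]
  · intro h; exact ⟨T, h, rfl⟩

lemma ofSets_eq_iff {α : Type} {W : BView α} (ht : totalView W) (S : Set (Set α)) :
    W = ofSets S ↔ ∀ T, ((T, T) ∈ W ↔ T ∈ S) := by
  constructor
  · intro h T; rw [h]; exact mem_ofSets
  · intro h
    ext i
    constructor
    · intro hi
      obtain ⟨Hi, Ti⟩ := i
      have e : Hi = Ti := ht _ hi
      subst e
      exact ⟨Hi, (h Hi).1 hi, rfl⟩
    · rintro ⟨T, hT, rfl⟩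
      exact (h T).2 hT

lemma viewLE_refl {α : Type} (W : BView α) : viewLE W W :=
  ⟨fun i hi => ⟨i.1, by rwa [Prod.mk.eta], subset_rfl⟩,
   fun i hi => ⟨i.1, by rwa [Prod.mk.eta], subset_rfl⟩⟩

/-- W is a FAEEL-world view of Γ iff W is both a FEEL-world view
and a G91-world view of Γ. -/
theorem stmt4 {α : Type} (Γ : Set (EForm α)) (W : BView α) (hW : totalView W) :
    FAEEL Γ W ↔ FEEL Γ W ∧ G91 Γ W := by
  constructor
  · rintro ⟨hbv, htot, heq⟩
    rw [ofSets_eq_iff htot] at heq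
    obtain ⟨⟨H0, T0⟩, hi0⟩ := hbv.1
    have e0 : H0 = T0 := hW _ hi0
    subst e0
    have heqb0 := (heq H0).1 hi0
    have hep : ∀ φ ∈ Γ, epSat W φ := heqb0.2.1.2.2.2
    have hepM : epModel W Γ := ⟨hbv, hep⟩
    have hN : ∀ W', epModel W' Γ → ¬ viewLT W' W := by
      intro W' hW' hlt
      obtain ⟨⟨hle1, hle2⟩, hne'⟩ := hlt
      obtain ⟨H', hH'W', hH'sub⟩ := hle1 _ hi0
      exact heqb0.2.2 W' H' H0
        ⟨hW'.1, hW'.1.2 _ hH'W', fun φ hφ => hW'.2 φ hφ _ hH'W', hW'.2⟩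
        ⟨⟨⟨rfl, hH'sub⟩, hle1, hle2⟩, fun hc => hne' (congrArg Prod.fst hc)⟩
    refine ⟨⟨hW, hepM, hN⟩, hbv, hW, (ofSets_eq_iff hW _).2 fun T => ?_⟩
    constructor
    · intro hT
      have heqb := (heq T).1 hT
      show stableModel _ T
      rw [stable_iff hW hbv.1 Γ T]
      refine ⟨heqb.2.1.2.2.1, fun H hHT hall => ?_⟩
      exact heqb.2.2 W H T ⟨hbv, hHT.subset, hall, hep⟩
        ⟨⟨⟨rfl, hHT.subset⟩, (viewLE_refl W).1, (viewLE_refl W).2⟩,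
         fun hc => hHT.ne (congrArg Prod.fst (congrArg Prod.snd hc))⟩
    · intro hT
      have hst : stableModel (reduct W Set.univ '' Γ) T := hT
      rw [stable_iff hW hbv.1 Γ T] at hst
      refine (heq T).2 ⟨hW, ⟨hbv, subset_rfl, hst.1, hep⟩, ?_⟩
      intro W' H' T' hbm hlt
      obtain ⟨⟨⟨hTT, hsub⟩, hle1, hle2⟩, hne'⟩ := hlt
      subst hTT
      by_cases hWW : W' = W
      · subst hWW
        exact hst.2 H' (hsub.ssubset_of_ne (fun h => hne' (by rw [h]))) hbm.2.2.1
      · exact hN W' ⟨hbm.1, hbm.2.2.2⟩ ⟨⟨hle1, hle2⟩, hWW⟩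
  · rintro ⟨⟨htot, hepM, hmin⟩, hbv, _, heqG⟩
    rw [ofSets_eq_iff hW] at heqG
    have hep := hepM.2
    refine ⟨hbv, hW, (ofSets_eq_iff hW _).2 fun T => ?_⟩
    constructor
    · intro hT
      have hst : stableModel (reduct W Set.univ '' Γ) T := (heqG T).1 hT
      rw [stable_iff hW hbv.1 Γ T] at hst
      refine ⟨hW, ⟨hbv, subset_rfl, hst.1, hep⟩, ?_⟩
      intro W' H' T' hbm hlt
      obtain ⟨⟨⟨hTT, hsub⟩, hle1, hle2⟩, hne'⟩ := hlt
      subst hTT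
      by_cases hWW : W' = W
      · subst hWW
        exact hst.2 H' (hsub.ssubset_of_ne (fun h => hne' (by rw [h]))) hbm.2.2.1
      · exact hmin W' ⟨hbm.1, hbm.2.2.2⟩ ⟨⟨hle1, hle2⟩, hWW⟩
    · intro hT
      refine (heqG T).2 ?_
      show stableModel _ T
      rw [stable_iff hW hbv.1 Γ T]
      refine ⟨hT.2.1.2.2.1, fun H hHT hall => ?_⟩
      exact hT.2.2 W H T ⟨hbv, hHT.subset, hall, hep⟩
        ⟨⟨⟨rfl, hHT.subset⟩, (viewLE_refl W).1, (viewLE_refl W).2⟩,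
         fun hc => hHT.ne (congrArg Prod.fst (congrArg Prod.snd hc))⟩
end Epist
end

section
/- Let U ⊆ At be a set of atoms and Π = Π₁ ∪ Π₂ a program such that Atoms(Π₁) ⊆ U and Atoms(Π₂) ⊆ Ū = At∖U. Then a total belief view W is a FEEL-world view of Π if and only if W|_U is a FEEL-world view of Π₁ and W|_Ū is a FEEL-world view of Π₂. -/
namespace Epist

attribute [local instance] Classical.propDecidable

variable {α : Type}

end Epist
namespace Epist

variable {α : Type}

lemma tview_vrestrict (W : BView α) (U : Set α) :
    tview (vrestrict W U) = vrestrict (tview W) U := by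
  ext i
  constructor
  · rintro ⟨j, ⟨k, hk, rfl⟩, rfl⟩
    exact ⟨(k.2, k.2), ⟨k, hk, rfl⟩, rfl⟩
  · rintro ⟨j, ⟨k, hk, rfl⟩, rfl⟩
    exact ⟨(k.1 ∩ U, k.2 ∩ U), ⟨k, hk, rfl⟩, rfl⟩

lemma sat_vrestrict (U : Set α) :
    ∀ (φ : EForm α), φ.atoms ⊆ U →
      ∀ (W : BView α) (H T : Set α),
        sat φ W H T ↔ sat φ (vrestrict W U) (H ∩ U) (T ∩ U) := by
  intro φ
  induction φ with
  | bot => intro _ W H T; simp [sat]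
  | atom a =>
      intro h W H T
      have ha : a ∈ U := h (by simp [EForm.atoms])
      simp [sat, ha]
  | and φ ψ ihφ ihψ =>
      intro h W H T
      obtain ⟨h1, h2⟩ := Set.union_subset_iff.mp h
      simp only [sat]
      rw [ihφ h1 W H T, ihψ h2 W H T]
  | or φ ψ ihφ ihψ =>
      intro h W H T
      obtain ⟨h1, h2⟩ := Set.union_subset_iff.mp h
      simp only [sat]
      rw [ihφ h1 W H T, ihψ h2 W H T]
  | imp φ ψ ihφ ihψ =>
      intro h W H T
      obtain ⟨h1, h2⟩ := Set.union_subset_iff.mp h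
      simp only [sat]
      rw [ihφ h1 W H T, ihψ h2 W H T, ihφ h1 (tview W) T T, ihψ h2 (tview W) T T,
        ← tview_vrestrict]
  | K φ ih =>
      intro h W H T
      simp only [sat]
      constructor
      · rintro hK i ⟨j, hj, rfl⟩
        exact (ih h W j.1 j.2).mp (hK j hj)
      · intro hK j hj
        exact (ih h W j.1 j.2).mpr (hK _ ⟨j, hj, rfl⟩)

lemma epSat_vrestrict {U : Set α} {φ : EForm α} (hφ : φ.atoms ⊆ U) (W : BView α) :
    epSat W φ ↔ epSat (vrestrict W U) φ := by
  constructor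
  · rintro h i ⟨j, hj, rfl⟩
    exact (sat_vrestrict U φ hφ W j.1 j.2).mp (h j hj)
  · intro h j hj
    exact (sat_vrestrict U φ hφ W j.1 j.2).mpr (h _ ⟨j, hj, rfl⟩)

lemma isBView_vrestrict {W : BView α} (h : isBView W) (U : Set α) :
    isBView (vrestrict W U) := by
  obtain ⟨⟨j, hj⟩, hsub⟩ := h
  refine ⟨⟨_, ⟨j, hj, rfl⟩⟩, ?_⟩
  rintro i ⟨k, hk, rfl⟩
  exact Set.inter_subset_inter_left U (hsub k hk)

lemma totalView_vrestrict {W : BView α} (h : totalView W) (U : Set α) :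
    totalView (vrestrict W U) := by
  rintro i ⟨k, hk, rfl⟩
  simp [h k hk]

lemma viewLE_vrestrict {W' W : BView α} (h : viewLE W' W) (U : Set α) :
    viewLE (vrestrict W' U) (vrestrict W U) := by
  constructor
  · rintro i ⟨j, hj, rfl⟩
    obtain ⟨H₁, hH₁, hs⟩ := h.1 j hj
    exact ⟨H₁ ∩ U, ⟨(H₁, j.2), hH₁, rfl⟩, Set.inter_subset_inter_left U hs⟩
  · rintro i ⟨j, hj, rfl⟩
    obtain ⟨H₂, hH₂, hs⟩ := h.2 j hj
    exact ⟨H₂ ∩ U, ⟨(H₂, j.2), hH₂, rfl⟩, Set.inter_subset_inter_left U hs⟩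

lemma viewLE_total_eq {W' W : BView α} (h' : totalView W') (hw : totalView W)
    (h : viewLE W' W) : W' = W := by
  ext i
  obtain ⟨H, T⟩ := i
  constructor
  · intro hi
    obtain ⟨H₂, hH₂, hs⟩ := h.2 _ hi
    have e1 : H₂ = T := hw _ hH₂
    have e2 : H = T := h' _ hi
    rw [e1] at hH₂; rw [e2]; exact hH₂
  · intro hi
    obtain ⟨H₁, hH₁, hs⟩ := h.1 _ hi
    have e1 : H₁ = T := h' _ hH₁
    have e2 : H = T := hw _ hi
    rw [e1] at hH₁; rw [e2]; exact hH₁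

lemma epModel_vrestrict {Γ : Set (EForm α)} {U : Set α} (hΓ : ∀ φ ∈ Γ, φ.atoms ⊆ U)
    {W : BView α} (h : epModel W Γ) : epModel (vrestrict W U) Γ :=
  ⟨isBView_vrestrict h.1 U, fun φ hφ => (epSat_vrestrict (hΓ φ hφ) W).mp (h.2 φ hφ)⟩

lemma disjForm_atoms (l : List α) : (disjForm l).atoms ⊆ {a | a ∈ l} := by
  induction l with
  | nil => simp [disjForm, EForm.atoms]
  | cons a l ih =>
      intro b hb
      rcases hb with hb | hb
      · simp only [EForm.atoms, Set.mem_singleton_iff] at hb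
        simp [hb]
      · exact List.mem_cons_of_mem a (ih hb)

lemma conjForm_atoms (l : List (EForm α)) :
    (conjForm l).atoms ⊆ {a | ∃ φ ∈ l, a ∈ φ.atoms} := by
  induction l with
  | nil => simp [conjForm, EForm.atoms, EForm.top, EForm.neg]
  | cons φ l ih =>
      intro b hb
      rcases hb with hb | hb
      · exact ⟨φ, List.mem_cons_self, hb⟩
      · obtain ⟨ψ, hψ, hb⟩ := ih hb
        exact ⟨ψ, List.mem_cons_of_mem φ hψ, hb⟩

lemma form_atoms (r : ERule α) : (ERule.form r).atoms ⊆ r.atoms := by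
  intro a ha
  rcases ha with ha | ha
  · exact Or.inr (conjForm_atoms r.body ha)
  · exact Or.inl (disjForm_atoms r.head ha)

lemma progTheory_atoms {P : EProgram α} {U : Set α} (h : progAtoms P ⊆ U) :
    ∀ φ ∈ progTheory P, φ.atoms ⊆ U := by
  rintro φ ⟨r, hr, rfl⟩ a ha
  exact h ⟨r, hr, form_atoms r ha⟩

/-- Replace the `U`-part of the total view `W` by `V`. -/
def patch (W V : BView α) (U : Set α) : BView α :=
  {i | ∃ j ∈ W, ∃ v ∈ V, v.2 = j.2 ∩ U ∧ i = (v.1 ∪ j.2 ∩ Uᶜ, j.2)}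

lemma patch_inter_U {v1 j2 U : Set α} (hv : v1 ⊆ U) : (v1 ∪ j2 ∩ Uᶜ) ∩ U = v1 := by
  ext a
  have := @hv a
  simp only [Set.mem_inter_iff, Set.mem_union, Set.mem_compl_iff]
  tauto

lemma patch_inter_Uc {v1 j2 U : Set α} (hv : v1 ⊆ U) :
    (v1 ∪ j2 ∩ Uᶜ) ∩ Uᶜ = j2 ∩ Uᶜ := by
  ext a
  have := @hv a
  simp only [Set.mem_inter_iff, Set.mem_union, Set.mem_compl_iff]
  tauto

/-- The one-sided core of the splitting theorem for FEEL. -/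
lemma feel_forward {Γ₁ Γ₂ : Set (EForm α)} {U : Set α}
    (hA1 : ∀ φ ∈ Γ₁, φ.atoms ⊆ U) (hA2 : ∀ φ ∈ Γ₂, φ.atoms ⊆ Uᶜ)
    {W : BView α} (hW : totalView W)
    (h : FEEL (Γ₁ ∪ Γ₂) W) : FEEL Γ₁ (vrestrict W U) := by
  obtain ⟨htot, hmod, hmin⟩ := h
  have hmod1 : epModel W Γ₁ := ⟨hmod.1, fun φ hφ => hmod.2 φ (Or.inl hφ)⟩
  refine ⟨totalView_vrestrict hW U, epModel_vrestrict hA1 hmod1, ?_⟩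
  rintro V hVmod ⟨hVle, hVne⟩
  -- auxiliary facts
  have hVwf : ∀ v ∈ V, v.1 ⊆ v.2 := hVmod.1.2
  -- for every j ∈ W there is a matching v ∈ V
  have hex : ∀ j ∈ W, ∃ v ∈ V, v.2 = j.2 ∩ U ∧ v.1 ⊆ j.2 ∩ U := by
    intro j hj
    obtain ⟨H₁, hH₁, hs⟩ := hVle.1 (j.1 ∩ U, j.2 ∩ U) ⟨j, hj, rfl⟩
    refine ⟨(H₁, j.2 ∩ U), hH₁, rfl, ?_⟩
    simpa [hW j hj] using hs
  -- every v ∈ V has a matching j ∈ W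
  have hVT : ∀ v ∈ V, ∃ j ∈ W, v.2 = j.2 ∩ U := by
    intro v hv
    obtain ⟨H₂, hH₂, _⟩ := hVle.2 v hv
    obtain ⟨j, hj, hje⟩ := hH₂
    exact ⟨j, hj, congrArg Prod.snd hje⟩
  set W' := patch W V U with hW'def
  have hsubU : ∀ v ∈ V, ∀ j ∈ W, v.2 = j.2 ∩ U → v.1 ⊆ U := by
    intro v hv j hj he
    intro a ha
    have := hVwf v hv ha
    rw [he] at this
    exact this.2
  -- restriction of patch to U is V
  have hres1 : vrestrict W' U = V := by
    ext i
    constructor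
    · rintro ⟨p, ⟨j, hj, v, hv, hveq, rfl⟩, rfl⟩
      have hv1 : v.1 ⊆ U := hsubU v hv j hj hveq
      have : ((v.1 ∪ j.2 ∩ Uᶜ) ∩ U, j.2 ∩ U) = v := by
        rw [patch_inter_U hv1, ← hveq]
      rw [this]
      exact hv
    · intro hv
      obtain ⟨j, hj, hveq⟩ := hVT _ hv
      have hv1 : i.1 ⊆ U := hsubU i hv j hj hveq
      refine ⟨(i.1 ∪ j.2 ∩ Uᶜ, j.2), ⟨j, hj, i, hv, hveq, rfl⟩, ?_⟩
      rw [show ((i.1 ∪ j.2 ∩ Uᶜ, j.2) : Set α × Set α).1 ∩ U = i.1 from patch_inter_U hv1]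
      exact Prod.ext rfl hveq
  -- restriction of patch to Uᶜ is that of W
  have hres2 : vrestrict W' Uᶜ = vrestrict W Uᶜ := by
    ext i
    constructor
    · rintro ⟨p, ⟨j, hj, v, hv, hveq, rfl⟩, rfl⟩
      have hv1 : v.1 ⊆ U := hsubU v hv j hj hveq
      refine ⟨j, hj, ?_⟩
      rw [show ((v.1 ∪ j.2 ∩ Uᶜ, j.2) : Set α × Set α).1 ∩ Uᶜ = j.2 ∩ Uᶜ from
        patch_inter_Uc hv1]
      exact Prod.ext (by rw [hW j hj]) rfl
    · rintro ⟨j, hj, rfl⟩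
      obtain ⟨v, hv, hveq, hvs⟩ := hex j hj
      have hv1 : v.1 ⊆ U := hsubU v hv j hj hveq
      refine ⟨(v.1 ∪ j.2 ∩ Uᶜ, j.2), ⟨j, hj, v, hv, hveq, rfl⟩, ?_⟩
      rw [show ((v.1 ∪ j.2 ∩ Uᶜ, j.2) : Set α × Set α).1 ∩ Uᶜ = j.2 ∩ Uᶜ from
        patch_inter_Uc hv1]
      exact Prod.ext (by rw [hW j hj]) rfl
  -- patch is a wellformed view
  have hbv : isBView W' := by
    constructor
    · obtain ⟨j, hj⟩ := hmod.1.1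
      obtain ⟨v, hv, hveq, hvs⟩ := hex j hj
      exact ⟨_, ⟨j, hj, v, hv, hveq, rfl⟩⟩
    · rintro i ⟨j, hj, v, hv, hveq, rfl⟩
      refine Set.union_subset ?_ Set.inter_subset_left
      intro a ha
      have := hVwf v hv ha
      rw [hveq] at this
      exact this.1
  -- patch is an epistemic model of Γ₁ ∪ Γ₂
  have hmod' : epModel W' (Γ₁ ∪ Γ₂) := by
    refine ⟨hbv, ?_⟩
    rintro φ (hφ | hφ)
    · refine (epSat_vrestrict (hA1 φ hφ) W').mpr ?_
      rw [hres1]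
      exact hVmod.2 φ hφ
    · refine (epSat_vrestrict (hA2 φ hφ) W').mpr ?_
      rw [hres2]
      exact (epSat_vrestrict (hA2 φ hφ) W).mp (hmod.2 φ (Or.inr hφ))
  -- patch is strictly below W
  have hlt : viewLT W' W := by
    refine ⟨⟨?_, ?_⟩, ?_⟩
    · intro j hj
      obtain ⟨v, hv, hveq, hvs⟩ := hex j hj
      refine ⟨v.1 ∪ j.2 ∩ Uᶜ, ⟨j, hj, v, hv, hveq, rfl⟩, ?_⟩
      rw [hW j hj]
      exact Set.union_subset (hvs.trans Set.inter_subset_left) Set.inter_subset_left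
    · rintro i ⟨j, hj, v, hv, hveq, rfl⟩
      refine ⟨j.2, ?_, ?_⟩
      · have : (j.2, j.2) = j := Prod.ext (hW j hj).symm rfl
        rw [this]; exact hj
      · refine Set.union_subset ?_ Set.inter_subset_left
        intro a ha
        have := hVwf v hv ha
        rw [hveq] at this
        exact this.1
    · intro he
      apply hVne
      rw [← hres1, he]
  exact hmin W' hmod' hlt

/-- Backward direction of the splitting theorem. -/
lemma feel_backward {Γ₁ Γ₂ : Set (EForm α)} {U : Set α}
    (hA1 : ∀ φ ∈ Γ₁, φ.atoms ⊆ U) (hA2 : ∀ φ ∈ Γ₂, φ.atoms ⊆ Uᶜ)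
    {W : BView α} (hW : totalView W)
    (h1 : FEEL Γ₁ (vrestrict W U)) (h2 : FEEL Γ₂ (vrestrict W Uᶜ)) :
    FEEL (Γ₁ ∪ Γ₂) W := by
  have hWne : W.Nonempty := by
    obtain ⟨i, j, hj, _⟩ := h1.2.1.1.1
    exact ⟨j, hj⟩
  have hbv : isBView W := ⟨hWne, fun i hi => le_of_eq (hW i hi)⟩
  have hmod : epModel W (Γ₁ ∪ Γ₂) := by
    refine ⟨hbv, ?_⟩
    rintro φ (hφ | hφ)
    · exact (epSat_vrestrict (hA1 φ hφ) W).mpr (h1.2.1.2 φ hφ)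
    · exact (epSat_vrestrict (hA2 φ hφ) W).mpr (h2.2.1.2 φ hφ)
  refine ⟨hW, hmod, ?_⟩
  rintro W' hW'mod ⟨hle, hne⟩
  have hW'mod1 : epModel W' Γ₁ := ⟨hW'mod.1, fun φ hφ => hW'mod.2 φ (Or.inl hφ)⟩
  have hW'mod2 : epModel W' Γ₂ := ⟨hW'mod.1, fun φ hφ => hW'mod.2 φ (Or.inr hφ)⟩
  have he1 : vrestrict W' U = vrestrict W U := by
    by_contra hne'
    exact h1.2.2 _ (epModel_vrestrict hA1 hW'mod1) ⟨viewLE_vrestrict hle U, hne'⟩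
  have he2 : vrestrict W' Uᶜ = vrestrict W Uᶜ := by
    by_contra hne'
    exact h2.2.2 _ (epModel_vrestrict hA2 hW'mod2) ⟨viewLE_vrestrict hle Uᶜ, hne'⟩
  have hW'tot : totalView W' := by
    intro i hi
    have t1 : i.1 ∩ U = i.2 ∩ U := by
      have : ((i.1 ∩ U, i.2 ∩ U) : Set α × Set α) ∈ vrestrict W U := by
        rw [← he1]; exact ⟨i, hi, rfl⟩
      exact totalView_vrestrict hW U _ this
    have t2 : i.1 ∩ Uᶜ = i.2 ∩ Uᶜ := by
      have : ((i.1 ∩ Uᶜ, i.2 ∩ Uᶜ) : Set α × Set α) ∈ vrestrict W Uᶜ := by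
        rw [← he2]; exact ⟨i, hi, rfl⟩
      exact totalView_vrestrict hW Uᶜ _ this
    calc i.1 = i.1 ∩ U ∪ i.1 ∩ Uᶜ := (Set.inter_union_compl i.1 U).symm
      _ = i.2 ∩ U ∪ i.2 ∩ Uᶜ := by rw [t1, t2]
      _ = i.2 := Set.inter_union_compl i.2 U
  exact hne (viewLE_total_eq hW'tot hW hle)

/-- splitting a program into two halves with disjoint signatures. -/
theorem stmt6 {α : Type} (U : Set α) (P1 P2 : EProgram α)
    (h1 : progWF P1) (h2 : progWF P2)
    (hA1 : progAtoms P1 ⊆ U) (hA2 : progAtoms P2 ⊆ Uᶜ)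
    (W : BView α) (hW : totalView W) :
    FEEL (progTheory (P1 ∪ P2)) W ↔
      FEEL (progTheory P1) (vrestrict W U) ∧ FEEL (progTheory P2) (vrestrict W Uᶜ) := by
  have hΓ : progTheory (P1 ∪ P2) = progTheory P1 ∪ progTheory P2 :=
    Set.image_union _ _ _
  have hA1' : ∀ φ ∈ progTheory P1, φ.atoms ⊆ U := progTheory_atoms hA1
  have hA2' : ∀ φ ∈ progTheory P2, φ.atoms ⊆ Uᶜ := progTheory_atoms hA2
  have hA1'' : ∀ φ ∈ progTheory P1, φ.atoms ⊆ Uᶜᶜ := by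
    simpa [compl_compl] using hA1'
  rw [hΓ]
  constructor
  · intro h
    refine ⟨feel_forward hA1' hA2' hW h, ?_⟩
    have h' : FEEL (progTheory P2 ∪ progTheory P1) W := by
      rwa [Set.union_comm]
    exact feel_forward hA2' hA1'' hW h'
  · rintro ⟨hh1, hh2⟩
    exact feel_backward hA1' hA2' hW hh1 hh2
end Epist
end
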